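/- Binary Golay complementary pairs exist only for even lengths greater than 1: if (a,b) is a pair of {±1}-valued sequences of length N ≥ 2 with A(a)(s)+A(b)(s)=0 for all s ≠ 0, then N is even. -/

import Mathlib

open Finset Complex

/-- Extension of a length-`N` sequence to `ℤ` by zero outside `[0, N)`. -/
noncomputable def extSeq (N : ℕ) (d : ℕ → ℂ) : ℤ → ℂ :=
  fun i => if 0 ≤ i ∧ i < (N : ℤ) then d i.toNat else 0

/-- Aperiodic cross-correlation of length-`N` complex sequences at integer shift `s`. -/
noncomputable def acorr (N : ℕ) (d e : ℕ → ℂ) (s : ℤ) : ℂ :=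
  ∑ k ∈ Finset.range N, extSeq N d k * (starRingEnd ℂ) (extSeq N e (k + s))

/-- Aperiodic autocorrelation. -/
noncomputable def aauto (N : ℕ) (e : ℕ → ℂ) (s : ℤ) : ℂ := acorr N e e s

/-- Golay complementary pair of length `N`. -/
def IsGCP (N : ℕ) (a b : ℕ → ℂ) : Prop :=
  ∀ s : ℤ, s ≠ 0 → aauto N a s + aauto N b s = 0

lemma aauto_nat_eval (N : ℕ) (e : ℕ → ℂ) (s : ℕ) (hs : s ≤ N) :
    aauto N e (s : ℤ) = ∑ k ∈ Finset.range (N - s), e k * (starRingEnd ℂ) (e (k + s)) := by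
  unfold aauto acorr
  have h1 : ∀ k ∈ Finset.range N,
      extSeq N e k * (starRingEnd ℂ) (extSeq N e (k + s))
      = if k < N - s then e k * (starRingEnd ℂ) (e (k + s)) else 0 := by
    intro k hk
    rw [Finset.mem_range] at hk
    have hk0 : extSeq N e k = e k := by
      simp only [extSeq]
      rw [if_pos ⟨by positivity, by exact_mod_cast hk⟩]
      simp
    rw [hk0]
    by_cases hlt : k < N - s
    · rw [if_pos hlt]
      have h2 : extSeq N e ((k : ℤ) + s) = e (k + s) := by
        simp only [extSeq]
        rw [if_pos ⟨by positivity, by push_cast; omega⟩]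
        congr 1
      rw [h2]
    · rw [if_neg hlt]
      have h2 : extSeq N e ((k : ℤ) + s) = 0 := by
        simp only [extSeq]
        rw [if_neg (by push_cast; omega)]
      rw [h2]
      simp
  rw [Finset.sum_congr rfl h1]
  rw [← Finset.sum_subset (Finset.range_subset_range.mpr (Nat.sub_le N s))]
  · exact Finset.sum_congr rfl fun k hk => if_pos (Finset.mem_range.mp hk)
  · intro k _ hk
    exact if_neg (fun h => hk (Finset.mem_range.mpr h))

lemma sum_zero_prod_pm (n : ℕ) (f : ℕ → ℤ)
    (hf : ∀ i < n, f i = 1 ∨ f i = -1)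
    (h : ∑ i ∈ Finset.range n, f i = 0) :
    ∃ m, n = 2 * m ∧ ∏ i ∈ Finset.range n, f i = (-1) ^ m := by
  classical
  set T := (Finset.range n).filter (fun i => f i = -1) with hT
  have hTsub : T ⊆ Finset.range n := Finset.filter_subset _ _
  have hTle : T.card ≤ n := by
    have := Finset.card_le_card hTsub
    rwa [Finset.card_range] at this
  have hone : ∀ i ∈ Finset.range n \ T, f i = 1 := by
    intro i hi
    rw [Finset.mem_sdiff] at hi
    rcases hf i (Finset.mem_range.mp hi.1) with h1 | h1
    · exact h1
    · exact absurd (Finset.mem_filter.mpr ⟨hi.1, h1⟩) hi.2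
  have hcard : (Finset.range n \ T).card = n - T.card := by
    rw [Finset.card_sdiff_of_subset hTsub, Finset.card_range]
  have hsum1 : ∑ i ∈ T, f i = -(T.card : ℤ) := by
    rw [Finset.sum_congr rfl (fun i hi => (Finset.mem_filter.mp hi).2)]
    simp [hT]
  have hsum2 : ∑ i ∈ Finset.range n \ T, f i = ((n - T.card : ℕ) : ℤ) := by
    rw [Finset.sum_congr rfl hone, Finset.sum_const, hcard]
    simp
  have hsplit := Finset.sum_sdiff (f := f) hTsub
  rw [h, hsum1, hsum2] at hsplit
  have hn2 : n = 2 * T.card := by omega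
  refine ⟨T.card, hn2, ?_⟩
  rw [← Finset.prod_sdiff (f := f) hTsub]
  have hp1 : ∏ i ∈ T, f i = (-1 : ℤ) ^ T.card := by
    rw [Finset.prod_congr rfl (fun i hi => (Finset.mem_filter.mp hi).2)]
    simp [hT]
  have hp2 : ∏ i ∈ Finset.range n \ T, f i = 1 := by
    rw [Finset.prod_congr rfl hone]
    simp
  rw [hp1, hp2, one_mul]

/-- binary GCPs exist only for even lengths (for `N ≥ 2`). -/
theorem binary_gcp_even_length (N : ℕ) (hN : 2 ≤ N) (a b : ℕ → ℂ)
    (ha : ∀ k < N, a k = 1 ∨ a k = -1)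
    (hb : ∀ k < N, b k = 1 ∨ b k = -1)
    (h : IsGCP N a b) :
    Even N := by
  classical
  set ia : ℕ → ℤ := fun k => if a k = 1 then 1 else -1 with hia_def
  set ib : ℕ → ℤ := fun k => if b k = 1 then 1 else -1 with hib_def
  have hca : ∀ k < N, (ia k : ℂ) = a k := by
    intro k hk
    rcases ha k hk with h1 | h1 <;> simp [hia_def, h1] <;> norm_num
  have hcb : ∀ k < N, (ib k : ℂ) = b k := by
    intro k hk
    rcases hb k hk with h1 | h1 <;> simp [hib_def, h1] <;> norm_num
  have hsa : ∀ k < N, (starRingEnd ℂ) (a k) = a k := by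
    intro k hk; rcases ha k hk with h1 | h1 <;> simp [h1]
  have hsb : ∀ k < N, (starRingEnd ℂ) (b k) = b k := by
    intro k hk; rcases hb k hk with h1 | h1 <;> simp [h1]
  have hpma : ∀ k, ia k = 1 ∨ ia k = -1 := by
    intro k; by_cases h1 : a k = 1 <;> simp [hia_def, h1]
  have hpmb : ∀ k, ib k = 1 ∨ ib k = -1 := by
    intro k; by_cases h1 : b k = 1 <;> simp [hib_def, h1]
  -- shift s = 1
  have h1a : aauto N a ((1 : ℕ) : ℤ)
      = ((∑ k ∈ Finset.range (N - 1), ia k * ia (k + 1) : ℤ) : ℂ) := by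
    rw [aauto_nat_eval N a 1 (by omega)]
    push_cast
    refine Finset.sum_congr rfl fun k hk => ?_
    rw [Finset.mem_range] at hk
    rw [hsa (k + 1) (by omega), ← hca k (by omega), ← hca (k + 1) (by omega)]
  have h1b : aauto N b ((1 : ℕ) : ℤ)
      = ((∑ k ∈ Finset.range (N - 1), ib k * ib (k + 1) : ℤ) : ℂ) := by
    rw [aauto_nat_eval N b 1 (by omega)]
    push_cast
    refine Finset.sum_congr rfl fun k hk => ?_
    rw [Finset.mem_range] at hk
    rw [hsb (k + 1) (by omega), ← hcb k (by omega), ← hcb (k + 1) (by omega)]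
  have hsum : ∑ k ∈ Finset.range (N - 1), ia k * ia (k + 1)
      + ∑ k ∈ Finset.range (N - 1), ib k * ib (k + 1) = 0 := by
    have hh := h 1 one_ne_zero
    rw [show (1 : ℤ) = ((1 : ℕ) : ℤ) by norm_num, h1a, h1b] at hh
    exact_mod_cast hh
  -- combine into one sequence of signs
  set g : ℕ → ℤ := fun k => if k < N - 1 then ia k * ia (k + 1)
    else ib (k - (N - 1)) * ib (k - (N - 1) + 1) with hg_def
  have hg_sum : ∑ k ∈ Finset.range (2 * (N - 1)), g k = 0 := by
    rw [two_mul, Finset.sum_range_add]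
    have e1 : ∀ k ∈ Finset.range (N - 1), g k = ia k * ia (k + 1) := by
      intro k hk; rw [Finset.mem_range] at hk; simp [hg_def, hk]
    have e2 : ∀ k ∈ Finset.range (N - 1), g ((N - 1) + k) = ib k * ib (k + 1) := by
      intro k hk
      simp only [hg_def]
      rw [if_neg (by omega)]
      congr 2 <;> omega
    rw [Finset.sum_congr rfl e1, Finset.sum_congr rfl e2]
    exact hsum
  have hg_pm : ∀ i < 2 * (N - 1), g i = 1 ∨ g i = -1 := by
    intro i _
    simp only [hg_def]
    split
    · rcases hpma i with h1 | h1 <;> rcases hpma (i + 1) with h2 | h2 <;>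
        rw [h1, h2] <;> norm_num
    · rcases hpmb (i - (N - 1)) with h1 | h1 <;> rcases hpmb (i - (N - 1) + 1) with h2 | h2 <;>
        rw [h1, h2] <;> norm_num
  obtain ⟨m, hm, hprod⟩ := sum_zero_prod_pm (2 * (N - 1)) g hg_pm hg_sum
  have hmN : m = N - 1 := by omega
  subst hmN
  have hprod_split : ∏ k ∈ Finset.range (2 * (N - 1)), g k
      = (∏ k ∈ Finset.range (N - 1), ia k * ia (k + 1))
        * ∏ k ∈ Finset.range (N - 1), ib k * ib (k + 1) := by
    rw [two_mul, Finset.prod_range_add]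
    congr 1
    · exact Finset.prod_congr rfl fun k hk => by
        rw [Finset.mem_range] at hk; simp [hg_def, hk]
    · refine Finset.prod_congr rfl fun k hk => ?_
      simp only [hg_def]
      rw [if_neg (by omega)]
      congr 2 <;> omega
  -- evaluate the telescoping products
  have key_prod : ∀ (c : ℕ → ℤ), (∀ k, c k = 1 ∨ c k = -1) →
      ∏ k ∈ Finset.range (N - 1), c k * c (k + 1) = c 0 * c (N - 1) := by
    intro c hc
    rw [Finset.prod_mul_distrib]
    set Q := ∏ k ∈ Finset.range (N - 1), c k with hQ
    set R := ∏ k ∈ Finset.range (N - 1), c (k + 1) with hR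
    have hNsucc : N = (N - 1) + 1 := by omega
    have hP1 : (∏ k ∈ Finset.range N, c k) * (∏ k ∈ Finset.range N, c k) = 1 := by
      rw [← Finset.prod_mul_distrib]
      refine Finset.prod_eq_one fun k _ => ?_
      rcases hc k with h1 | h1 <;> rw [h1] <;> ring
    have hQ1 : Q * c (N - 1) = ∏ k ∈ Finset.range N, c k := by
      conv_rhs => rw [hNsucc, Finset.prod_range_succ]
    have hR1 : R * c 0 = ∏ k ∈ Finset.range N, c k := by
      conv_rhs => rw [hNsucc, Finset.prod_range_succ']
    have hc2 : (c 0 * c (N - 1)) * (c 0 * c (N - 1)) = 1 := by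
      rcases hc 0 with h1 | h1 <;> rcases hc (N - 1) with h2 | h2 <;>
        rw [h1, h2] <;> ring
    calc Q * R = (Q * R) * ((c 0 * c (N - 1)) * (c 0 * c (N - 1))) := by rw [hc2]; ring
      _ = ((Q * c (N - 1)) * (R * c 0)) * (c 0 * c (N - 1)) := by ring
      _ = 1 * (c 0 * c (N - 1)) := by rw [hQ1, hR1, hP1]
      _ = c 0 * c (N - 1) := one_mul _
  rw [hprod_split, key_prod ia hpma, key_prod ib hpmb] at hprod
  -- shift s = N - 1
  have hNm1 : ((N - 1 : ℕ) : ℤ) ≠ 0 := by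
    simp only [ne_eq, Nat.cast_eq_zero]; omega
  have hend := h ((N - 1 : ℕ) : ℤ) hNm1
  rw [aauto_nat_eval N a (N - 1) (by omega), aauto_nat_eval N b (N - 1) (by omega)] at hend
  have hNN : N - (N - 1) = 1 := by omega
  rw [hNN, Finset.sum_range_one, Finset.sum_range_one, Nat.zero_add] at hend
  rw [hsa (N - 1) (by omega), hsb (N - 1) (by omega)] at hend
  rw [← hca 0 (by omega), ← hca (N - 1) (by omega),
      ← hcb 0 (by omega), ← hcb (N - 1) (by omega)] at hend
  have hendZ : ia 0 * ia (N - 1) + ib 0 * ib (N - 1) = 0 := by exact_mod_cast hend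
  have hxy : (ia 0 * ia (N - 1)) * (ib 0 * ib (N - 1)) = -1 := by
    rcases hpmb 0 with h1 | h1 <;> rcases hpmb (N - 1) with h2 | h2 <;>
      rw [h1, h2] at hendZ ⊢ <;> nlinarith [hendZ]
  rw [hxy] at hprod
  -- conclude
  by_contra hodd
  have hNodd : Odd N := Nat.odd_iff.mpr (by
    rcases Nat.even_or_odd N with he | ho
    · exact absurd he hodd
    · exact Nat.odd_iff.mp ho)
  have hEvenN1 : Even (N - 1) := Nat.Odd.sub_odd hNodd odd_one
  rw [hEvenN1.neg_one_pow] at hprod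
  norm_num at hprod
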